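/- arXiv:1908.00325 — 5 statements merged into one kernel-verified Lean document; each statement's English description precedes it below -/
import Mathlib

section
/- Let n, K, n_K be positive integers with n = K·n_K and K ≥ 2. Let (Ω, 𝒫) be a probability space and e_1, …, e_n square-integrable real random variables on Ω. Let 𝒦 denote the fold map assigning observation i to fold 𝒦(i) = k whenever n_K(k−1) < i ≤ n_K·k. Assume there exist real numbers σ², ω, γ such that Var(e_i) = σ² for every i; Cov(e_i, e_j) = ω for every i ≠ j with 𝒦(i) = 𝒦(j); and Cov(e_i, e_j) = γ for every i, j with 𝒦(i) ≠ 𝒦(j). Then the variance of the K-fold cross-validation error estimator Err = (1/n)·Σ_{i=1}^n e_i satisfies Var(Err) = σ²/n + ((n_K−1)/n)·ω + ((n−n_K)/n)·γ. -/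
open MeasureTheory ProbabilityTheory Finset

lemma fold_card (n K nK : ℕ) (hnK : 0 < nK) (hn : n = K * nK) (i : Fin n) :
    (Finset.univ.filter (fun j : Fin n => j.val / nK = i.val / nK)).card = nK := by
  have hqK : i.val / nK < K :=
    (Nat.div_lt_iff_lt_mul hnK).mpr (by rw [← hn]; exact i.isLt)
  have key : (Finset.univ.filter (fun j : Fin n => j.val / nK = i.val / nK)).card
      = (Finset.range nK).card := by
    apply Finset.card_bij' (fun (j : Fin n) _ => j.val % nK)
      (fun r hr => (⟨nK * (i.val / nK) + r, by
        have hr' : r < nK := Finset.mem_range.mp hr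
        calc nK * (i.val / nK) + r < nK * (i.val / nK) + nK := by omega
          _ = nK * (i.val / nK + 1) := by ring
          _ ≤ nK * K := Nat.mul_le_mul_left nK hqK
          _ = n := by rw [hn, mul_comm]⟩ : Fin n))
    case hi =>
      intro j hj
      exact Finset.mem_range.mpr (Nat.mod_lt _ hnK)
    case hj =>
      intro r hr
      have hr' : r < nK := Finset.mem_range.mp hr
      simp only [Finset.mem_filter, Finset.mem_univ, true_and]
      show (nK * (i.val / nK) + r) / nK = i.val / nK
      rw [Nat.mul_add_div hnK, Nat.div_eq_of_lt hr', add_zero]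
    case left_inv =>
      intro j hj
      simp only [Finset.mem_filter, Finset.mem_univ, true_and] at hj
      apply Fin.ext
      show nK * (i.val / nK) + j.val % nK = j.val
      rw [← hj]
      exact Nat.div_add_mod j.val nK
    case right_inv =>
      intro r hr
      have hr' : r < nK := Finset.mem_range.mp hr
      show (nK * (i.val / nK) + r) % nK = r
      rw [Nat.mul_add_mod, Nat.mod_eq_of_lt hr']
  simpa using key

/-- The variance of the K-fold cross-validation error estimator
`Err = (1/n) ∑ i, e i` in terms of the covariance structure of the
per-observation errors `e i`.  The fold map assigns observation `i`
(0-indexed, as `Fin n`) to fold `i.val / nK`, which is the 0-indexed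
version of `𝒦(i) = k ↔ n_K (k-1) < i ≤ n_K k`. -/
theorem cvk_variance
    {Ω : Type*} [MeasurableSpace Ω] (P : Measure Ω) [IsProbabilityMeasure P]
    (n K nK : ℕ) (hK : 2 ≤ K) (hnK : 0 < nK) (hn : n = K * nK)
    (e : Fin n → Ω → ℝ) (he : ∀ i, MemLp (e i) 2 P)
    (σ2 ω γ : ℝ)
    (hvar : ∀ i, variance (e i) P = σ2)
    (hcov_same : ∀ i j : Fin n, i ≠ j → i.val / nK = j.val / nK →
      ∫ x, (e i x - ∫ y, e i y ∂P) * (e j x - ∫ y, e j y ∂P) ∂P = ω)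
    (hcov_diff : ∀ i j : Fin n, i.val / nK ≠ j.val / nK →
      ∫ x, (e i x - ∫ y, e i y ∂P) * (e j x - ∫ y, e j y ∂P) ∂P = γ) :
    variance (fun x => (1 / (n : ℝ)) * ∑ i, e i x) P =
      σ2 / (n : ℝ) + (((nK : ℝ) - 1) / (n : ℝ)) * ω
        + (((n : ℝ) - (nK : ℝ)) / (n : ℝ)) * γ := by
  have hnpos : 0 < n := by
    rw [hn]; exact Nat.mul_pos (lt_of_lt_of_le (by norm_num) hK) hnK
  have hnne : (n : ℝ) ≠ 0 := Nat.cast_ne_zero.mpr hnpos.ne'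
  set μe : Fin n → ℝ := fun i => ∫ y, e i y ∂P with hμe
  set f : Fin n → Ω → ℝ := fun i x => e i x - μe i with hf
  have hfLp : ∀ i, MemLp (f i) 2 P := fun i => (he i).sub (memLp_const (μe i))
  -- integrability of products
  have hint : ∀ i j : Fin n, Integrable (fun x => f i x * f j x) P := by
    intro i j
    have h1 : Integrable (fun x => (f i x + f j x) ^ 2) P := by
      have := ((hfLp i).add (hfLp j)).integrable_sq
      simpa [Pi.add_apply] using this
    have h2 := (hfLp i).integrable_sq
    have h3 := (hfLp j).integrable_sq
    have key : (fun x => f i x * f j x)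
        = fun x => (1 / 2 : ℝ) * (((f i x + f j x) ^ 2 - f i x ^ 2) - f j x ^ 2) := by
      funext x; ring
    rw [key]
    exact ((h1.sub h2).sub h3).const_mul _
  -- diagonal terms
  have hdiag : ∀ i : Fin n, ∫ x, f i x * f i x ∂P = σ2 := by
    intro i
    rw [← hvar i, variance_eq_integral (he i).aestronglyMeasurable.aemeasurable]
    refine integral_congr_ae (Filter.Eventually.of_forall fun x => ?_)
    simp only [hf, Pi.pow_apply, Pi.sub_apply]
    ring
  -- expected value of Err
  have hEint : ∀ i : Fin n, Integrable (e i) P := fun i => (he i).integrable one_le_two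
  have hEc : ∫ x, (1 / (n : ℝ)) * ∑ i, e i x ∂P = (1 / (n : ℝ)) * ∑ i, μe i := by
    rw [integral_const_mul, integral_finset_sum _ (fun i _ => hEint i)]
  -- MemLp of Err
  have hSLp : MemLp (fun x => (1 / (n : ℝ)) * ∑ i, e i x) 2 P := by
    have := memLp_finset_sum' (Finset.univ : Finset (Fin n)) (fun i _ => he i)
    have h2 : MemLp (fun x => ∑ i, e i x) 2 P := by
      have heq : (fun x => ∑ i, e i x) = ∑ i, e i := by funext x; simp
      rw [heq]; exact this
    exact h2.const_mul _
  -- rewrite variance as an iterated sum of covariances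
  have hvarS : variance (fun x => (1 / (n : ℝ)) * ∑ i, e i x) P
      = (1 / (n : ℝ)) ^ 2 * ∑ i, ∑ j, ∫ x, f i x * f j x ∂P := by
    rw [variance_eq_integral hSLp.aestronglyMeasurable.aemeasurable]
    change ∫ x, ((((fun x => (1 / (n : ℝ)) * ∑ i, e i x) - fun _ => ∫ x, (1 / (n : ℝ)) * ∑ i, e i x ∂P) ^ (2 : ℕ) : Ω → ℝ)) x ∂P = _
    have hfun : ((fun x => (1 / (n : ℝ)) * ∑ i, e i x)
          - fun _ => ∫ x, (1 / (n : ℝ)) * ∑ i, e i x ∂P) ^ (2 : ℕ)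
        = fun x => (1 / (n : ℝ)) ^ 2 * ∑ i, ∑ j, f i x * f j x := by
      funext x
      simp only [Pi.pow_apply, Pi.sub_apply]
      rw [hEc, ← mul_sub, ← Finset.sum_sub_distrib, mul_pow]
      congr 1
      rw [sq, Finset.sum_mul_sum]
    rw [hfun, integral_const_mul, integral_finset_sum _
      (fun i _ => integrable_finset_sum _ (fun j _ => hint i j))]
    congr 1
    exact Finset.sum_congr rfl fun i _ =>
      integral_finset_sum _ (fun j _ => hint i j)
  -- the inner sum for each fixed i
  have hrow : ∀ i : Fin n, ∑ j, ∫ x, f i x * f j x ∂P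
      = σ2 + ((nK : ℝ) - 1) * ω + ((n : ℝ) - (nK : ℝ)) * γ := by
    intro i
    set s : Finset (Fin n) := Finset.univ.filter (fun j : Fin n => j.val / nK = i.val / nK)
      with hs
    have hcard_s : s.card = nK := fold_card n K nK hnK hn i
    have hi_mem : i ∈ s := by simp [hs]
    have hsplit := Finset.sum_filter_add_sum_filter_not Finset.univ
      (fun j : Fin n => j.val / nK = i.val / nK) (fun j => ∫ x, f i x * f j x ∂P)
    rw [← hsplit]
    have hA : ∑ j ∈ s, ∫ x, f i x * f j x ∂P = σ2 + ((nK : ℝ) - 1) * ω := by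
      rw [← Finset.add_sum_erase _ _ hi_mem, hdiag i]
      congr 1
      have : ∀ j ∈ s.erase i, ∫ x, f i x * f j x ∂P = ω := by
        intro j hj
        have hji : j ≠ i := Finset.ne_of_mem_erase hj
        have hjs : j ∈ s := Finset.mem_of_mem_erase hj
        have hfold : j.val / nK = i.val / nK := by
          simpa [hs] using hjs
        exact hcov_same i j (Ne.symm hji) hfold.symm
      rw [Finset.sum_congr rfl this, Finset.sum_const,
        Finset.card_erase_of_mem hi_mem, hcard_s, nsmul_eq_mul]
      rw [Nat.cast_sub hnK, Nat.cast_one, mul_comm]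
    have hcardc : (Finset.univ.filter
        (fun j : Fin n => ¬ j.val / nK = i.val / nK)).card = n - nK := by
      have := Finset.card_filter_add_card_filter_not
        (s := (Finset.univ : Finset (Fin n)))
        (p := fun j : Fin n => j.val / nK = i.val / nK)
      rw [Finset.card_univ, Fintype.card_fin, ← hs, hcard_s] at this
      omega
    have hB : ∑ j ∈ Finset.univ.filter (fun j : Fin n => ¬ j.val / nK = i.val / nK),
        ∫ x, f i x * f j x ∂P = ((n : ℝ) - (nK : ℝ)) * γ := by
      have : ∀ j ∈ Finset.univ.filter (fun j : Fin n => ¬ j.val / nK = i.val / nK),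
          ∫ x, f i x * f j x ∂P = γ := by
        intro j hj
        simp only [Finset.mem_filter, Finset.mem_univ, true_and] at hj
        exact hcov_diff i j (fun h => hj h.symm)
      rw [Finset.sum_congr rfl this, Finset.sum_const, hcardc, nsmul_eq_mul]
      have hle : nK ≤ n := by
        rw [hn]; exact Nat.le_mul_of_pos_left nK (lt_of_lt_of_le (by norm_num) hK)
      rw [Nat.cast_sub hle, mul_comm]
    rw [hA, hB]
  rw [hvarS, Finset.sum_congr rfl (fun i _ => hrow i), Finset.sum_const,
    Finset.card_univ, Fintype.card_fin, nsmul_eq_mul]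
  field_simp
end

section
/- Let n, K, n_K be positive integers with n = K·n_K and K ≥ 2. Let (Ω, 𝒫) be a probability space and e_1, …, e_n square-integrable real random variables on Ω with the fold map 𝒦(i) = k whenever n_K(k−1) < i ≤ n_K·k. Assume there exist real numbers μ, σ², ω, γ such that E[e_i] = μ and Var(e_i) = σ² for every i; Cov(e_i, e_j) = ω for every i ≠ j with 𝒦(i) = 𝒦(j); and Cov(e_i, e_j) = γ whenever 𝒦(i) ≠ 𝒦(j). Let err_k = (1/n_K)·Σ_{i : 𝒦(i)=k} e_i and let V̂ = (1/K)·(1/(K−1))·Σ_{k=1}^K (err_k − (1/K)·Σ_{k'=1}^K err_{k'})² be the naive (sample-variance based) estimator of the variance of the cross-validation estimator. Then E[V̂] = σ²/n + ((n_K−1)/n)·ω − γ/K. -/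
open scoped ENNReal
open MeasureTheory ProbabilityTheory Finset

private lemma aux_int_mul {Ω : Type*} [MeasurableSpace Ω] {P : Measure Ω} {f g : Ω → ℝ}
    (hf : MemLp f 2 P) (hg : MemLp g 2 P) : Integrable (fun x => f x * g x) P := by
  rw [← memLp_one_iff_integrable]
  have h : (1 : ℝ≥0∞) / 1 = 1 / 2 + 1 / 2 := by
    rw [ENNReal.div_add_div_same, one_div_one]
    norm_num
    rw [ENNReal.div_self] <;> norm_num
  have := hf.smul hg (p := 2) (q := 2) (r := 1)
  exact (by simpa [smul_eq_mul, mul_comm] using this : MemLp (f * g) 1 P)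

private lemma aux_div_eq_iff {nK : ℕ} (hnK : 0 < nK) (i k : ℕ) :
    i / nK = k ↔ nK * k ≤ i ∧ i < nK * k + nK := by
  constructor
  · rintro rfl
    refine ⟨?_, ?_⟩
    · calc nK * (i / nK) = (i / nK) * nK := by ring
        _ ≤ i := Nat.div_mul_le_self i nK
    · calc i < (i / nK + 1) * nK := (Nat.div_lt_iff_lt_mul hnK).mp (Nat.lt_succ_self _)
        _ = nK * (i / nK) + nK := by ring
  · rintro ⟨h1, h2⟩
    have ha : k ≤ i / nK := (Nat.le_div_iff_mul_le hnK).mpr (Nat.mul_comm nK k ▸ h1)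
    have hb : i / nK < k + 1 := (Nat.div_lt_iff_lt_mul hnK).mpr
      (by calc i < nK * k + nK := h2
            _ = (k + 1) * nK := by ring)
    omega

private lemma aux_card {n K nK : ℕ} (hnK : 0 < nK) (hn : n = K * nK) {k : ℕ} (hk : k < K) :
    (Finset.univ.filter (fun i : Fin n => i.val / nK = k)).card = nK := by
  have h1 : (Finset.univ.filter (fun i : Fin n => i.val / nK = k)).card
      = ((Finset.range n).filter (fun i => i / nK = k)).card := by
    apply Finset.card_nbij (fun i => i.val)
    · intro a ha
      simp only [Finset.mem_coe, Finset.mem_filter, Finset.mem_univ, true_and] at ha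
      exact Finset.mem_coe.mpr (by simp [Finset.mem_filter, Finset.mem_range, ha, a.isLt])
    · intro a _ b _ h; exact Fin.ext h
    · intro a ha
      rw [Finset.mem_coe, Finset.mem_filter, Finset.mem_range] at ha
      exact ⟨⟨a, ha.1⟩, by simp [Finset.mem_filter, ha.2], rfl⟩
  have h2 : ((Finset.range n).filter (fun i => i / nK = k)) = Finset.Ico (nK * k) (nK * k + nK) := by
    ext i
    simp only [Finset.mem_filter, Finset.mem_range, Finset.mem_Ico, aux_div_eq_iff hnK]
    have hle : nK * k + nK ≤ n := by
      calc nK * k + nK = nK * (k + 1) := by ring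
        _ ≤ nK * K := Nat.mul_le_mul_left _ hk
        _ = n := by rw [hn, Nat.mul_comm]
    constructor
    · rintro ⟨_, h⟩; exact h
    · rintro ⟨ha, hb⟩; exact ⟨by omega, ha, hb⟩
  rw [h1, h2, Nat.card_Ico]; omega

private lemma aux_fold_lt {n K nK : ℕ} (hnK : 0 < nK) (hn : n = K * nK) (i : Fin n) :
    i.val / nK < K := (Nat.div_lt_iff_lt_mul hnK).mpr (by rw [← hn]; exact i.isLt)

/-- The expectation of the naive (sample-variance based) estimator
`V̂ = (1/K)·(1/(K-1))·∑ₖ (errₖ - mean)²` of the variance of the K-fold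
cross-validation error estimator, where `err k = (1/n_K) ∑_{i : 𝒦(i)=k} e i`.
The fold map assigns observation `i : Fin n` (0-indexed) to fold
`i.val / nK`, the 0-indexed version of `𝒦(i) = k ↔ n_K (k-1) < i ≤ n_K k`. -/
theorem cvk_naive_variance_estimator_expectation
    {Ω : Type*} [MeasurableSpace Ω] (P : Measure Ω) [IsProbabilityMeasure P]
    (n K nK : ℕ) (hK : 2 ≤ K) (hnK : 0 < nK) (hn : n = K * nK)
    (e : Fin n → Ω → ℝ) (he : ∀ i, MemLp (e i) 2 P)
    (μ σ2 ω γ : ℝ)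
    (hmean : ∀ i, ∫ x, e i x ∂P = μ)
    (hvar : ∀ i, variance (e i) P = σ2)
    (hcov_same : ∀ i j : Fin n, i ≠ j → i.val / nK = j.val / nK →
      ∫ x, (e i x - ∫ y, e i y ∂P) * (e j x - ∫ y, e j y ∂P) ∂P = ω)
    (hcov_diff : ∀ i j : Fin n, i.val / nK ≠ j.val / nK →
      ∫ x, (e i x - ∫ y, e i y ∂P) * (e j x - ∫ y, e j y ∂P) ∂P = γ)
    (err : ℕ → Ω → ℝ)
    (herr : ∀ k x, err k x =
      (1 / (nK : ℝ)) * ∑ i ∈ Finset.univ.filter (fun i : Fin n => i.val / nK = k), e i x) :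
    (∫ x, (1 / (K : ℝ)) * (1 / ((K : ℝ) - 1)) *
        ∑ k ∈ Finset.range K,
          (err k x - (1 / (K : ℝ)) * ∑ k' ∈ Finset.range K, err k' x) ^ 2 ∂P) =
      σ2 / (n : ℝ) + (((nK : ℝ) - 1) / (n : ℝ)) * ω - γ / (K : ℝ) := by
  classical
  have hn0 : 0 < n := by
    rw [hn]; exact Nat.mul_pos (by omega) hnK
  have hnKlen : nK ≤ n := by
    rw [hn]; exact Nat.le_mul_of_pos_left nK (by omega)
  have hK0 : 0 < K := by omega
  have hKr : (0 : ℝ) < K := by exact_mod_cast hK0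
  have hnr : (0 : ℝ) < n := by exact_mod_cast hn0
  have hnKr : (0 : ℝ) < nK := by exact_mod_cast hnK
  have hKne : (K : ℝ) ≠ 0 := ne_of_gt hKr
  have hnne : (n : ℝ) ≠ 0 := ne_of_gt hnr
  have hnKne : (nK : ℝ) ≠ 0 := ne_of_gt hnKr
  have hK1 : (K : ℝ) - 1 ≠ 0 := by
    have : (2 : ℝ) ≤ K := by exact_mod_cast hK
    linarith
  have hncast : (n : ℝ) = (K : ℝ) * nK := by exact_mod_cast hn
  -- centered variables
  set f : Fin n → Ω → ℝ := fun i x => e i x - μ with hfdef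
  have hf2 : ∀ i, MemLp (f i) 2 P := fun i => (he i).sub (memLp_const μ)
  have hprod : ∀ i j, Integrable (fun x => f i x * f j x) P :=
    fun i j => aux_int_mul (hf2 i) (hf2 j)
  -- covariance matrix
  set g : Fin n → Fin n → ℝ := fun i j =>
    γ + (if i.val / nK = j.val / nK then ω - γ else 0) + (if i = j then σ2 - ω else 0) with hgdef
  have hcov : ∀ i j : Fin n, ∫ x, f i x * f j x ∂P = g i j := by
    intro i j
    by_cases hij : i = j
    · subst hij
      have h1 : ∫ x, f i x * f i x ∂P = σ2 := by
        rw [← hvar i, variance_eq_integral (he i).aestronglyMeasurable.aemeasurable]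
        congr 1
        funext x
        simp only [hfdef, Pi.pow_apply, Pi.sub_apply, hmean i, sq]
      rw [h1]
      simp only [hgdef]
      norm_num
    · by_cases hfold : i.val / nK = j.val / nK
      · have h1 := hcov_same i j hij hfold
        simp only [hmean] at h1
        simp only [hgdef, if_pos hfold, if_neg hij, hfdef, h1]
        ring
      · have h1 := hcov_diff i j hfold
        simp only [hmean] at h1
        simp only [hgdef, if_neg hfold, if_neg hij, hfdef, h1]
        ring
  -- coefficients
  set c : ℕ → Fin n → ℝ :=
    fun k i => (if i.val / nK = k then (1 / (nK : ℝ)) else 0) - 1 / (n : ℝ) with hcdef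
  -- sum of coefficients is zero
  have hsum0 : ∀ k, k < K → ∑ i : Fin n, c k i = 0 := by
    intro k hk
    simp only [hcdef]
    rw [Finset.sum_sub_distrib, ← Finset.sum_filter, Finset.sum_const, Finset.sum_const,
      aux_card hnK hn hk, Finset.card_univ, Fintype.card_fin, nsmul_eq_mul, nsmul_eq_mul]
    rw [mul_one_div, mul_one_div, div_self hnKne, div_self hnne, sub_self]
  -- fiber sums of coefficients
  have hfiber : ∀ k, k < K → ∀ m, m < K →
      ∑ j ∈ Finset.univ.filter (fun j : Fin n => j.val / nK = m), c k j
        = (if m = k then (1 : ℝ) else 0) - 1 / (K : ℝ) := by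
    intro k hk m hm
    have hconst : ∀ j ∈ Finset.univ.filter (fun j : Fin n => j.val / nK = m),
        c k j = (if m = k then (1 / (nK : ℝ)) else 0) - 1 / (n : ℝ) := by
      intro j hj
      rw [Finset.mem_filter] at hj
      simp only [hcdef, hj.2]
    rw [Finset.sum_congr rfl hconst, Finset.sum_const, aux_card hnK hn hm, nsmul_eq_mul]
    by_cases hmk : m = k
    · simp only [if_pos hmk]
      rw [hncast]
      field_simp
    · simp only [if_neg hmk]
      rw [hncast]
      field_simp
      ring
  -- pointwise identity
  have hSfib : ∀ x, ∑ k' ∈ Finset.range K,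
      ∑ i ∈ Finset.univ.filter (fun i : Fin n => i.val / nK = k'), e i x
        = ∑ i : Fin n, e i x := by
    intro x
    exact Finset.sum_fiberwise_of_maps_to
      (fun i _ => Finset.mem_range.mpr (aux_fold_lt hnK hn i)) _
  have hpt : ∀ k, k < K → ∀ x,
      err k x - (1 / (K : ℝ)) * ∑ k' ∈ Finset.range K, err k' x
        = ∑ i : Fin n, c k i * f i x := by
    intro k hk x
    have hmeansum : (1 / (K : ℝ)) * ∑ k' ∈ Finset.range K, err k' x
        = (1 / (n : ℝ)) * ∑ i : Fin n, e i x := by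
      have : ∑ k' ∈ Finset.range K, err k' x
          = (1 / (nK : ℝ)) * ∑ i : Fin n, e i x := by
        simp only [herr]
        rw [← Finset.mul_sum, hSfib x]
      rw [this, ← mul_assoc, hncast]
      field_simp
    have hR : ∑ i : Fin n, c k i * f i x
        = (1 / (nK : ℝ)) *
            ((∑ i ∈ Finset.univ.filter (fun i : Fin n => i.val / nK = k), e i x)
              - (nK : ℝ) * μ)
          - (1 / (n : ℝ)) * ((∑ i : Fin n, e i x) - (n : ℝ) * μ) := by
      have step1 : ∑ i : Fin n, c k i * f i x
          = (∑ i : Fin n, (if i.val / nK = k then (1 / (nK : ℝ)) * (e i x - μ) else 0))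
            - ∑ i : Fin n, (1 / (n : ℝ)) * (e i x - μ) := by
        rw [← Finset.sum_sub_distrib]
        refine Finset.sum_congr rfl fun i _ => ?_
        simp only [hcdef, hfdef]
        by_cases h : i.val / nK = k <;> simp [h] <;> ring
      rw [step1, ← Finset.sum_filter, ← Finset.mul_sum, ← Finset.mul_sum,
        Finset.sum_sub_distrib, Finset.sum_sub_distrib, Finset.sum_const, Finset.sum_const,
        aux_card hnK hn hk, Finset.card_univ, Fintype.card_fin, nsmul_eq_mul, nsmul_eq_mul]
    rw [hmeansum, hR, herr]
    field_simp
    ring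
  -- the quadratic form value for each fold
  have hQ : ∀ k, k < K →
      ∑ i : Fin n, ∑ j : Fin n, c k i * c k j * g i j
        = (ω - γ) * (((K : ℝ) - 1) / K) + (σ2 - ω) * (((K : ℝ) - 1) / n) := by
    intro k hk
    have hrow : ∀ i : Fin n,
        ∑ j : Fin n, c k i * c k j * g i j
          = c k i * γ * (∑ j : Fin n, c k j)
            + (ω - γ) * (c k i *
                ∑ j ∈ Finset.univ.filter (fun j : Fin n => j.val / nK = i.val / nK), c k j)
            + (σ2 - ω) * (c k i * c k i) := by
      intro i
      have expand : ∀ j : Fin n, c k i * c k j * g i j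
          = c k i * γ * c k j
            + (if j.val / nK = i.val / nK then (ω - γ) * (c k i * c k j) else 0)
            + (if j = i then (σ2 - ω) * (c k i * c k j) else 0) := by
        intro j
        simp only [hgdef]
        by_cases h1 : i = j
        · subst h1
          simp only [eq_self_iff_true, if_true]
          ring
        · have h1' : ¬ (j = i) := fun h => h1 h.symm
          by_cases h2 : i.val / nK = j.val / nK
          · have h2' : j.val / nK = i.val / nK := h2.symm
            simp only [if_pos h2, if_pos h2', if_neg h1, if_neg h1']
            ring
          · have h2' : ¬ (j.val / nK = i.val / nK) := fun h => h2 h.symm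
            simp only [if_neg h2, if_neg h2', if_neg h1, if_neg h1']
            ring
      rw [Finset.sum_congr rfl (fun j _ => expand j), Finset.sum_add_distrib,
        Finset.sum_add_distrib]
      congr 1
      · congr 1
        · rw [Finset.mul_sum]
        · rw [← Finset.sum_filter]
          simp only [← mul_assoc]
          rw [← Finset.mul_sum, mul_assoc]
      · rw [Finset.sum_ite_eq' Finset.univ i (fun j => (σ2 - ω) * (c k i * c k j))]
        simp
    rw [Finset.sum_congr rfl (fun i _ => hrow i), Finset.sum_add_distrib,
      Finset.sum_add_distrib]
    have t1 : ∑ i : Fin n, c k i * γ * (∑ j : Fin n, c k j) = 0 := by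
      rw [hsum0 k hk]
      simp
    have t2 : ∑ i : Fin n, (ω - γ) * (c k i *
        ∑ j ∈ Finset.univ.filter (fun j : Fin n => j.val / nK = i.val / nK), c k j)
          = (ω - γ) * (((K : ℝ) - 1) / K) := by
      have e1 : ∀ i : Fin n, (ω - γ) * (c k i *
          ∑ j ∈ Finset.univ.filter (fun j : Fin n => j.val / nK = i.val / nK), c k j)
            = (ω - γ) * (c k i * ((if i.val / nK = k then (1 : ℝ) else 0) - 1 / K)) := by
        intro i
        rw [hfiber k hk (i.val / nK) (aux_fold_lt hnK hn i)]
      rw [Finset.sum_congr rfl (fun i _ => e1 i), ← Finset.mul_sum]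
      congr 1
      have e2 : ∀ i : Fin n, c k i * ((if i.val / nK = k then (1 : ℝ) else 0) - 1 / K)
          = (if i.val / nK = k then c k i else 0) - (1 / (K : ℝ)) * c k i := by
        intro i
        by_cases h : i.val / nK = k <;> simp [h] <;> ring
      rw [Finset.sum_congr rfl (fun i _ => e2 i), Finset.sum_sub_distrib, ← Finset.sum_filter,
        ← Finset.mul_sum, hsum0 k hk, mul_zero, sub_zero, hfiber k hk k hk, if_pos rfl]
      field_simp
    have t3 : ∑ i : Fin n, (σ2 - ω) * (c k i * c k i)
        = (σ2 - ω) * (((K : ℝ) - 1) / n) := by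
      rw [← Finset.mul_sum]
      congr 1
      have e3 : ∀ i : Fin n, c k i * c k i
          = (if i.val / nK = k then (1 / (nK : ℝ) - 1 / n) ^ 2 else (1 / (n : ℝ)) ^ 2) := by
        intro i
        by_cases h : i.val / nK = k <;> simp [hcdef, h] <;> ring
      rw [Finset.sum_congr rfl (fun i _ => e3 i), Finset.sum_ite, Finset.sum_const,
        Finset.sum_const, aux_card hnK hn hk, nsmul_eq_mul, nsmul_eq_mul]
      have hcompl : (Finset.univ.filter (fun i : Fin n => ¬ (i.val / nK = k))).card = n - nK := by
        have h := Finset.card_filter_add_card_filter_not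
          (s := (Finset.univ : Finset (Fin n))) (p := fun i : Fin n => i.val / nK = k)
        rw [aux_card hnK hn hk, Finset.card_univ, Fintype.card_fin] at h
        omega
      rw [hcompl]
      have hcast2 : ((n - nK : ℕ) : ℝ) = (n : ℝ) - nK := by
        exact Nat.cast_sub hnKlen
      rw [hcast2, hncast]
      field_simp
      ring
    rw [t1, t2, t3, zero_add]
  -- integrability pieces
  have hI1 : ∀ (k : ℕ) (i j : Fin n),
      Integrable (fun x => (c k i * c k j) * (f i x * f j x)) P :=
    fun k i j => (hprod i j).const_mul _
  have hI2 : ∀ (k : ℕ) (i : Fin n),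
      Integrable (fun x => ∑ j : Fin n, (c k i * c k j) * (f i x * f j x)) P :=
    fun k i => integrable_finset_sum _ (fun j _ => hI1 k i j)
  have hI3 : ∀ (k : ℕ),
      Integrable (fun x => ∑ i : Fin n, ∑ j : Fin n, (c k i * c k j) * (f i x * f j x)) P :=
    fun k => integrable_finset_sum _ (fun i _ => hI2 k i)
  -- main integral computation
  have hrew : (fun x => (1 / (K : ℝ)) * (1 / ((K : ℝ) - 1)) *
        ∑ k ∈ Finset.range K,
          (err k x - (1 / (K : ℝ)) * ∑ k' ∈ Finset.range K, err k' x) ^ 2)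
      = fun x => (1 / (K : ℝ)) * (1 / ((K : ℝ) - 1)) *
        ∑ k ∈ Finset.range K, ∑ i : Fin n, ∑ j : Fin n,
          (c k i * c k j) * (f i x * f j x) := by
    funext x
    congr 1
    refine Finset.sum_congr rfl fun k hk => ?_
    rw [hpt k (Finset.mem_range.mp hk) x, sq, Finset.sum_mul_sum]
    exact Finset.sum_congr rfl fun i _ => Finset.sum_congr rfl fun j _ => by ring
  have hmain : (∫ x, (1 / (K : ℝ)) * (1 / ((K : ℝ) - 1)) *
        ∑ k ∈ Finset.range K,
          (err k x - (1 / (K : ℝ)) * ∑ k' ∈ Finset.range K, err k' x) ^ 2 ∂P)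
      = (1 / (K : ℝ)) * (1 / ((K : ℝ) - 1)) *
          ∑ k ∈ Finset.range K, ∑ i : Fin n, ∑ j : Fin n, c k i * c k j * g i j := by
    rw [show (∫ x, (1 / (K : ℝ)) * (1 / ((K : ℝ) - 1)) *
        ∑ k ∈ Finset.range K,
          (err k x - (1 / (K : ℝ)) * ∑ k' ∈ Finset.range K, err k' x) ^ 2 ∂P)
      = ∫ x, (1 / (K : ℝ)) * (1 / ((K : ℝ) - 1)) *
        ∑ k ∈ Finset.range K, ∑ i : Fin n, ∑ j : Fin n,
          (c k i * c k j) * (f i x * f j x) ∂P from by rw [hrew]]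
    rw [MeasureTheory.integral_const_mul]
    congr 1
    rw [MeasureTheory.integral_finset_sum _ (fun k _ => hI3 k)]
    refine Finset.sum_congr rfl fun k _ => ?_
    rw [MeasureTheory.integral_finset_sum _ (fun i _ => hI2 k i)]
    refine Finset.sum_congr rfl fun i _ => ?_
    rw [MeasureTheory.integral_finset_sum _ (fun j _ => hI1 k i j)]
    refine Finset.sum_congr rfl fun j _ => ?_
    rw [MeasureTheory.integral_const_mul, hcov i j]
  rw [hmain]
  have hsumQ : ∑ k ∈ Finset.range K, ∑ i : Fin n, ∑ j : Fin n, c k i * c k j * g i j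
      = (K : ℝ) * ((ω - γ) * (((K : ℝ) - 1) / K) + (σ2 - ω) * (((K : ℝ) - 1) / n)) := by
    rw [Finset.sum_congr rfl (fun k hk => hQ k (Finset.mem_range.mp hk)), Finset.sum_const,
      Finset.card_range, nsmul_eq_mul]
  rw [hsumQ, hncast]
  field_simp
  ring
end

section
/- Let n, K, n_K be positive integers with n = K·n_K and K ≥ 2. Let e_1, …, e_n be square-integrable real random variables on a probability space, with fold map 𝒦(i) = k whenever n_K(k−1) < i ≤ n_K·k, and assume there exist real numbers μ, σ², ω, γ such that E[e_i] = μ and Var(e_i) = σ² for every i; Cov(e_i, e_j) = ω for every i ≠ j with 𝒦(i) = 𝒦(j); and Cov(e_i, e_j) = γ whenever 𝒦(i) ≠ 𝒦(j). Let Err = (1/n)·Σ_{i=1}^n e_i, err_k = (1/n_K)·Σ_{i : 𝒦(i)=k} e_i, and V̂ = (1/K)·(1/(K−1))·Σ_{k=1}^K (err_k − (1/K)·Σ_{k'} err_{k'})². Then the bias of V̂ as an estimator of Var(Err) equals −γ; that is, E[V̂] − Var(Err) = −γ. -/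
open MeasureTheory ProbabilityTheory Finset

/-- The bias of the naive (sample-variance based) estimator
`V̂ = (1/K)·(1/(K-1))·∑ₖ (errₖ - mean)²` of the variance of the K-fold
cross-validation error estimator `Err = (1/n) ∑ i, e i` equals `-γ`,
where `γ` is the covariance between errors of two observations lying
in different folds.  The fold map assigns observation `i : Fin n`
(0-indexed) to fold `i.val / nK`, the 0-indexed version of
`𝒦(i) = k ↔ n_K (k-1) < i ≤ n_K k`. -/
theorem cvk_naive_variance_estimator_bias
    {Ω : Type*} [MeasurableSpace Ω] (P : Measure Ω) [IsProbabilityMeasure P]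
    (n K nK : ℕ) (hK : 2 ≤ K) (hnK : 0 < nK) (hn : n = K * nK)
    (e : Fin n → Ω → ℝ) (he : ∀ i, MemLp (e i) 2 P)
    (μ σ2 ω γ : ℝ)
    (hmean : ∀ i, ∫ x, e i x ∂P = μ)
    (hvar : ∀ i, variance (e i) P = σ2)
    (hcov_same : ∀ i j : Fin n, i ≠ j → i.val / nK = j.val / nK →
      ∫ x, (e i x - ∫ y, e i y ∂P) * (e j x - ∫ y, e j y ∂P) ∂P = ω)
    (hcov_diff : ∀ i j : Fin n, i.val / nK ≠ j.val / nK →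
      ∫ x, (e i x - ∫ y, e i y ∂P) * (e j x - ∫ y, e j y ∂P) ∂P = γ)
    (err : ℕ → Ω → ℝ)
    (herr : ∀ k x, err k x =
      (1 / (nK : ℝ)) * ∑ i ∈ Finset.univ.filter (fun i : Fin n => i.val / nK = k), e i x) :
    (∫ x, (1 / (K : ℝ)) * (1 / ((K : ℝ) - 1)) *
        ∑ k ∈ Finset.range K,
          (err k x - (1 / (K : ℝ)) * ∑ k' ∈ Finset.range K, err k' x) ^ 2 ∂P)
      - variance (fun x => (1 / (n : ℝ)) * ∑ i, e i x) P = -γ := by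
  have hK0 : 0 < K := by omega
  have hn0 : 0 < n := by rw [hn]; positivity
  have hKR : (K : ℝ) ≠ 0 := by positivity
  have hK1R : (K : ℝ) - 1 ≠ 0 := by
    have : (2 : ℝ) ≤ K := by exact_mod_cast hK
    linarith
  have hnR : (n : ℝ) ≠ 0 := by positivity
  have hnKR : (nK : ℝ) ≠ 0 := by positivity
  have hnRK : (n : ℝ) = K * nK := by rw [hn]; push_cast; ring
  -- fold map
  have hfK : ∀ i : Fin n, i.val / nK < K := by
    intro i
    rw [Nat.div_lt_iff_lt_mul hnK]
    have := i.isLt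
    omega
  -- cardinality of folds
  have hcard : ∀ k, k < K →
      ((Finset.univ : Finset (Fin n)).filter (fun i : Fin n => i.val / nK = k)).card = nK := by
    intro k hk
    have h1 : ((Finset.univ : Finset (Fin n)).filter (fun i : Fin n => i.val / nK = k)).card
        = ((Finset.range n).filter (fun i => i / nK = k)).card := by
      refine Finset.card_bij (fun i _ => i.val) ?_ ?_ ?_
      · intro a ha
        simp only [Finset.mem_filter, Finset.mem_univ, true_and] at ha
        simp [Finset.mem_filter, Finset.mem_range, a.isLt, ha]
      · intro a _ b _ h
        exact Fin.val_injective h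
      · intro b hb
        simp only [Finset.mem_filter, Finset.mem_range] at hb
        exact ⟨⟨b, hb.1⟩, by simp [Finset.mem_filter, hb.2], rfl⟩
    have h2 : (Finset.range n).filter (fun i => i / nK = k)
        = Finset.Ico (k * nK) (k * nK + nK) := by
      ext i
      simp only [Finset.mem_filter, Finset.mem_range, Finset.mem_Ico]
      constructor
      · rintro ⟨hi, hdiv⟩
        constructor
        · calc k * nK = i / nK * nK := by rw [hdiv]
            _ ≤ i := Nat.div_mul_le_self i nK
        · have hmod := Nat.div_add_mod i nK
          have hr := Nat.mod_lt i hnK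
          rw [hdiv] at hmod
          have hcomm : k * nK = nK * k := Nat.mul_comm k nK
          omega
      · rintro ⟨h1', h2'⟩
        have hiK : i / nK = k := Nat.div_eq_of_lt_le h1' (by rw [Nat.succ_mul]; omega)
        refine ⟨?_, hiK⟩
        have : k + 1 ≤ K := hk
        calc i < k * nK + nK := h2'
          _ = (k + 1) * nK := by ring
          _ ≤ K * nK := Nat.mul_le_mul_right nK this
          _ = n := hn.symm
    rw [h1, h2, Nat.card_Ico]
    omega
  -- integrability facts
  have hint : ∀ i, Integrable (e i) P := fun i => (he i).integrable (by norm_num)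
  have hc2 : ∀ i : Fin n, MemLp (fun x => e i x - μ) 2 P :=
    fun i => (he i).sub (memLp_const μ)
  have hcc : ∀ i j : Fin n, Integrable (fun x => (e i x - μ) * (e j x - μ)) P := by
    intro i j
    have h1 : Integrable (fun x => ((e i x - μ) + (e j x - μ)) ^ 2) P :=
      ((hc2 i).add (hc2 j)).integrable_sq
    have h2 : Integrable (fun x => (e i x - μ) ^ 2) P := (hc2 i).integrable_sq
    have h3 : Integrable (fun x => (e j x - μ) ^ 2) P := (hc2 j).integrable_sq
    have heq : (fun x => (e i x - μ) * (e j x - μ)) =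
        fun x => (((e i x - μ) + (e j x - μ)) ^ 2 - (e i x - μ) ^ 2 - (e j x - μ) ^ 2) / 2 := by
      funext x; ring
    rw [heq]
    exact ((h1.sub h2).sub h3).div_const 2
  set g : Fin n → Fin n → ℝ := fun i j => ∫ x, (e i x - μ) * (e j x - μ) ∂P with hg
  have hgγ : ∀ i j : Fin n, i.val / nK ≠ j.val / nK → g i j = γ := by
    intro i j h
    have h2 := hcov_diff i j h
    rw [hmean i, hmean j] at h2
    exact h2
  -- quadratic expansion lemma
  have quad : ∀ a : Fin n → ℝ, (∫ x, (∑ i, a i * (e i x - μ)) ^ 2 ∂P)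
      = ∑ i, ∑ j, a i * a j * g i j := by
    intro a
    have h1 : ∀ x, (∑ i, a i * (e i x - μ)) ^ 2
        = ∑ i, ∑ j, a i * a j * ((e i x - μ) * (e j x - μ)) := by
      intro x
      rw [sq, Finset.sum_mul_sum]
      exact Finset.sum_congr rfl fun i _ => Finset.sum_congr rfl fun j _ => by ring
    simp_rw [h1]
    rw [integral_finset_sum _
      (fun i _ => integrable_finset_sum _ (fun j _ => (hcc i j).const_mul _))]
    refine Finset.sum_congr rfl fun i _ => ?_
    rw [integral_finset_sum _ (fun j _ => (hcc i j).const_mul _)]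
    exact Finset.sum_congr rfl fun j _ => integral_const_mul _ _
  -- mean of Err
  have hXint : (∫ x, (1 / (n : ℝ)) * ∑ i, e i x ∂P) = μ := by
    rw [integral_const_mul, integral_finset_sum _ (fun i _ => hint i)]
    simp only [hmean]
    rw [Finset.sum_const, Finset.card_univ, Fintype.card_fin, nsmul_eq_mul]
    field_simp
  have hX2 : MemLp (fun x => (1 / (n : ℝ)) * ∑ i, e i x) 2 P := by
    have hs : MemLp (fun x => ∑ i, e i x) 2 P := by
      have h0 := memLp_finset_sum' (μ := P) Finset.univ (fun i _ => he i)
      have heq : (fun x => ∑ i, e i x) = ∑ i : Fin n, e i := by funext x; simp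
      rwa [heq]
    exact hs.const_mul _
  -- variance of Err
  have hvarX : variance (fun x => (1 / (n : ℝ)) * ∑ i, e i x) P
      = ∑ i, ∑ j : Fin n, (1 / (n : ℝ)) * (1 / (n : ℝ)) * g i j := by
    rw [variance_eq_integral hX2.aestronglyMeasurable.aemeasurable, ← quad (fun _ => 1 / (n : ℝ))]
    congr 1
    funext x
    beta_reduce
    rw [hXint]
    congr 1
    simp only [mul_sub]
    rw [Finset.sum_sub_distrib, ← Finset.mul_sum, Finset.sum_const, Finset.card_univ,
      Fintype.card_fin, nsmul_eq_mul]
    field_simp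
  -- coefficients b
  set b : ℕ → Fin n → ℝ :=
    fun k i => (if i.val / nK = k then (1 / (nK : ℝ)) else 0) - 1 / (n : ℝ) with hb
  have hA : ∀ k x, err k x = ∑ i, (if i.val / nK = k then (1 / (nK : ℝ)) else 0) * e i x := by
    intro k x
    rw [herr k x, Finset.mul_sum, Finset.sum_filter]
    exact Finset.sum_congr rfl fun i _ => by split <;> simp
  have hB : ∀ x, ∑ k' ∈ Finset.range K, err k' x = (1 / (nK : ℝ)) * ∑ i, e i x := by
    intro x
    simp_rw [herr]
    rw [← Finset.mul_sum]
    congr 1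
    exact Finset.sum_fiberwise_of_maps_to (fun i _ => Finset.mem_range.2 (hfK i)) _
  have hbsum : ∀ k, k < K → ∑ i, b k i = 0 := by
    intro k hk
    simp only [hb]
    rw [Finset.sum_sub_distrib, ← Finset.sum_filter, Finset.sum_const, hcard k hk,
      Finset.sum_const, Finset.card_univ, Fintype.card_fin, nsmul_eq_mul, nsmul_eq_mul]
    field_simp
    norm_num
  have herr2 : ∀ k, k < K → ∀ x,
      err k x - (1 / (K : ℝ)) * ∑ k' ∈ Finset.range K, err k' x
        = ∑ i, b k i * (e i x - μ) := by
    intro k hk x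
    rw [hA k x, hB x]
    have h1 : (1 / (K : ℝ)) * ((1 / (nK : ℝ)) * ∑ i, e i x) = ∑ i, (1 / (n : ℝ)) * e i x := by
      rw [← mul_assoc, Finset.mul_sum]
      refine Finset.sum_congr rfl fun i _ => ?_
      congr 1
      rw [hnRK]
      field_simp
    rw [h1, ← Finset.sum_sub_distrib]
    have h0 : ∑ i, b k i * μ = 0 := by rw [← Finset.sum_mul, hbsum k hk, zero_mul]
    calc ∑ i, ((if i.val / nK = k then (1 / (nK : ℝ)) else 0) * e i x - (1 / (n : ℝ)) * e i x)
        = ∑ i, b k i * e i x := by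
          refine Finset.sum_congr rfl fun i _ => ?_
          simp only [hb]; ring
      _ = ∑ i, b k i * (e i x - μ) := by
          simp only [mul_sub]
          rw [Finset.sum_sub_distrib, h0, sub_zero]
  -- expectation of V̂
  have hEV : (∫ x, (1 / (K : ℝ)) * (1 / ((K : ℝ) - 1)) *
        ∑ k ∈ Finset.range K,
          (err k x - (1 / (K : ℝ)) * ∑ k' ∈ Finset.range K, err k' x) ^ 2 ∂P)
      = ∑ k ∈ Finset.range K, ∑ i, ∑ j : Fin n,
          (1 / (K : ℝ)) * (1 / ((K : ℝ) - 1)) * (b k i * b k j * g i j) := by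
    have hpt : ∀ x, (1 / (K : ℝ)) * (1 / ((K : ℝ) - 1)) *
        ∑ k ∈ Finset.range K,
          (err k x - (1 / (K : ℝ)) * ∑ k' ∈ Finset.range K, err k' x) ^ 2
        = ∑ k ∈ Finset.range K, ∑ i, ∑ j : Fin n,
            (1 / (K : ℝ)) * (1 / ((K : ℝ) - 1)) *
              (b k i * b k j * ((e i x - μ) * (e j x - μ))) := by
      intro x
      rw [Finset.mul_sum]
      refine Finset.sum_congr rfl fun k hk => ?_
      rw [herr2 k (Finset.mem_range.1 hk) x, sq, Finset.sum_mul_sum, Finset.mul_sum]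
      refine Finset.sum_congr rfl fun i _ => ?_
      rw [Finset.mul_sum]
      refine Finset.sum_congr rfl fun j _ => ?_
      ring
    have h1 : (∫ x, (1 / (K : ℝ)) * (1 / ((K : ℝ) - 1)) *
        ∑ k ∈ Finset.range K,
          (err k x - (1 / (K : ℝ)) * ∑ k' ∈ Finset.range K, err k' x) ^ 2 ∂P)
        = ∫ x, ∑ k ∈ Finset.range K, ∑ i, ∑ j : Fin n,
            (1 / (K : ℝ)) * (1 / ((K : ℝ) - 1)) *
              (b k i * b k j * ((e i x - μ) * (e j x - μ))) ∂P := by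
      congr 1; funext x; exact hpt x
    rw [h1, integral_finset_sum _ (fun k _ => integrable_finset_sum _
      (fun i _ => integrable_finset_sum _ (fun j _ => ((hcc i j).const_mul _).const_mul _)))]
    refine Finset.sum_congr rfl fun k _ => ?_
    rw [integral_finset_sum _ (fun i _ => integrable_finset_sum _
      (fun j _ => ((hcc i j).const_mul _).const_mul _))]
    refine Finset.sum_congr rfl fun i _ => ?_
    rw [integral_finset_sum _ (fun j _ => ((hcc i j).const_mul _).const_mul _)]
    refine Finset.sum_congr rfl fun j _ => ?_
    rw [integral_const_mul, integral_const_mul]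
  -- scalar weight identity
  have hW : ∀ i j : Fin n,
      (∑ k ∈ Finset.range K, (1 / (K : ℝ)) * (1 / ((K : ℝ) - 1)) * (b k i * b k j))
          - (1 / (n : ℝ)) * (1 / (n : ℝ))
        = if i.val / nK = j.val / nK then 0
          else -(K : ℝ) / (((K : ℝ) - 1) * (n : ℝ) ^ 2) := by
    intro i j
    have hXi : ∑ k ∈ Finset.range K, (if i.val / nK = k then (1 : ℝ) else 0) = 1 := by
      rw [Finset.sum_ite_eq]
      simp [Finset.mem_range.2 (hfK i)]
    have hXj : ∑ k ∈ Finset.range K, (if j.val / nK = k then (1 : ℝ) else 0) = 1 := by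
      rw [Finset.sum_ite_eq]
      simp [Finset.mem_range.2 (hfK j)]
    have hXij : ∑ k ∈ Finset.range K,
        (if i.val / nK = k then (1 : ℝ) else 0) * (if j.val / nK = k then (1 : ℝ) else 0)
        = if i.val / nK = j.val / nK then 1 else 0 := by
      have hterm : ∀ k, (if i.val / nK = k then (1 : ℝ) else 0) *
            (if j.val / nK = k then (1 : ℝ) else 0)
          = if i.val / nK = k then (if i.val / nK = j.val / nK then (1 : ℝ) else 0) else 0 := by
        intro k
        rcases eq_or_ne (i.val / nK) k with h1 | h1
        · rcases eq_or_ne (j.val / nK) k with h2 | h2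
          · rw [if_pos h1, if_pos h2, if_pos h1, if_pos (h1.trans h2.symm), one_mul]
          · have hne : i.val / nK ≠ j.val / nK := fun h => h2 (h.symm.trans h1)
            rw [if_pos h1, if_neg h2, if_pos h1, if_neg hne, mul_zero]
        · rw [if_neg h1, if_neg h1, zero_mul]
      rw [Finset.sum_congr rfl (fun k _ => hterm k), Finset.sum_ite_eq]
      simp [Finset.mem_range.2 (hfK i)]
    have hterm2 : ∀ k, (1 / (K : ℝ)) * (1 / ((K : ℝ) - 1)) * (b k i * b k j)
        = (1 / (K : ℝ)) * (1 / ((K : ℝ) - 1)) *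
            ((1 / (nK : ℝ)) ^ 2 *
                ((if i.val / nK = k then (1 : ℝ) else 0) *
                  (if j.val / nK = k then (1 : ℝ) else 0))
              - (1 / ((nK : ℝ) * (n : ℝ))) * (if i.val / nK = k then (1 : ℝ) else 0)
              - (1 / ((nK : ℝ) * (n : ℝ))) * (if j.val / nK = k then (1 : ℝ) else 0)
              + 1 / (n : ℝ) ^ 2) := by
      intro k
      simp only [hb]
      split_ifs <;> field_simp <;> ring
    rw [Finset.sum_congr rfl (fun k _ => hterm2 k), ← Finset.mul_sum]
    rw [Finset.sum_add_distrib, Finset.sum_sub_distrib, Finset.sum_sub_distrib,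
      ← Finset.mul_sum, ← Finset.mul_sum, ← Finset.mul_sum, hXij, hXi, hXj,
      Finset.sum_const, Finset.card_range, nsmul_eq_mul]
    by_cases hsame : i.val / nK = j.val / nK
    · rw [if_pos hsame, if_pos hsame]
      rw [hnRK]
      field_simp
      ring
    · rw [if_neg hsame, if_neg hsame]
      rw [hnRK]
      field_simp
      ring
  -- combine per row
  have hcombine : ∀ i : Fin n,
      (∑ k ∈ Finset.range K, ∑ j : Fin n,
          (1 / (K : ℝ)) * (1 / ((K : ℝ) - 1)) * (b k i * b k j * g i j))
        - ∑ j : Fin n, (1 / (n : ℝ)) * (1 / (n : ℝ)) * g i j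
      = ∑ j : Fin n, (if i.val / nK = j.val / nK then (0 : ℝ)
          else -(K : ℝ) / (((K : ℝ) - 1) * (n : ℝ) ^ 2) * γ) := by
    intro i
    rw [Finset.sum_comm, ← Finset.sum_sub_distrib]
    refine Finset.sum_congr rfl fun j _ => ?_
    have h1 : ∀ k, (1 / (K : ℝ)) * (1 / ((K : ℝ) - 1)) * (b k i * b k j * g i j)
        = ((1 / (K : ℝ)) * (1 / ((K : ℝ) - 1)) * (b k i * b k j)) * g i j := by
      intro k; ring
    rw [Finset.sum_congr rfl (fun k _ => h1 k), ← Finset.sum_mul, ← sub_mul, hW i j]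
    by_cases hsame : i.val / nK = j.val / nK
    · rw [if_pos hsame, if_pos hsame, zero_mul]
    · rw [if_neg hsame, if_neg hsame, hgγ i j hsame]
  rw [hEV, hvarX, Finset.sum_comm, ← Finset.sum_sub_distrib,
    Finset.sum_congr rfl (fun i _ => hcombine i)]
  -- count off-diagonal pairs
  have hrow : ∀ i : Fin n,
      ∑ j : Fin n, (if i.val / nK = j.val / nK then (0 : ℝ)
          else -(K : ℝ) / (((K : ℝ) - 1) * (n : ℝ) ^ 2) * γ)
      = ((n : ℝ) - (nK : ℝ)) * (-(K : ℝ) / (((K : ℝ) - 1) * (n : ℝ) ^ 2) * γ) := by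
    intro i
    rw [Finset.sum_ite, Finset.sum_const_zero, zero_add, Finset.sum_const, nsmul_eq_mul]
    congr 1
    have heq : (Finset.univ.filter (fun j : Fin n => i.val / nK = j.val / nK))
        = Finset.univ.filter (fun j : Fin n => j.val / nK = i.val / nK) := by
      apply Finset.filter_congr
      intro j _
      exact eq_comm
    have h2 : (Finset.univ.filter (fun j : Fin n => i.val / nK = j.val / nK)).card = nK := by
      rw [heq]; exact hcard _ (hfK i)
    rw [Finset.filter_not, Finset.card_sdiff_of_subset (Finset.filter_subset _ _), Finset.card_univ,
      Fintype.card_fin, h2]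
    have hle : nK ≤ n := by
      rw [hn]
      calc nK = 1 * nK := (one_mul nK).symm
        _ ≤ K * nK := Nat.mul_le_mul_right nK (by omega)
    rw [Nat.cast_sub hle]
  rw [Finset.sum_congr rfl (fun i _ => hrow i), Finset.sum_const, Finset.card_univ,
    Fintype.card_fin, nsmul_eq_mul]
  rw [hnRK]
  have h2K : (2 : ℝ) ≤ (K : ℝ) := by exact_mod_cast hK
  field_simp
end

section
/- Let n₁ and n₁K be positive integers with n₁K < n₁. Define g : ℝ → ℝ by g(ε) = (1/((n₁−n₁K)·C(n₁, n₁−n₁K)))·Σ_{r=1}^{n₁−n₁K} (1−ε)^{r−1}·(ε·n₁ − r·ε + 1), where C(a,b) denotes the binomial coefficient. Then g(0) = 1/C(n₁, n₁K), and the derivative of g at ε = 0 equals g'(0) = n₁K / C(n₁, n₁K); consequently g'(0)/g(0) = n₁K. (This is the probability, under perturbation of the probability mass of observation i by ε, of a cross-validation training set of size n₁ − n₁K that contains observation i.) -/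
open Finset

lemma cv_sum_aux (a : ℝ) (m : ℕ) :
    ∑ r ∈ Finset.Icc 1 m, (a + 1 - 2 * (r : ℝ)) = m * (a - m) := by
  induction m with
  | zero => simp
  | succ m ih =>
    rw [Finset.sum_Icc_succ_top (by omega : 1 ≤ m + 1), ih]
    push_cast
    ring

lemma cv_term_deriv (n1 r : ℕ) (hr : 1 ≤ r) :
    HasDerivAt (fun ε : ℝ => (1 - ε) ^ (r - 1) * (ε * (n1 : ℝ) - (r : ℝ) * ε + 1))
      ((n1 : ℝ) + 1 - 2 * r) 0 := by
  have h1 : HasDerivAt (fun ε : ℝ => 1 - ε) (-1) 0 := by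
    simpa using (hasDerivAt_id (0 : ℝ)).const_sub 1
  have h2 := h1.pow (r - 1)
  have h3 : HasDerivAt (fun ε : ℝ => ε * (n1 : ℝ) - (r : ℝ) * ε + 1)
      ((n1 : ℝ) - r) 0 := by
    have := (((hasDerivAt_id (0 : ℝ)).mul_const (n1 : ℝ)).sub
      ((hasDerivAt_id (0 : ℝ)).const_mul (r : ℝ))).add_const 1
    simpa using this
  have h4 := h2.mul h3
  refine h4.congr_deriv ?_
  have : ((r - 1 : ℕ) : ℝ) = (r : ℝ) - 1 := by
    push_cast [Nat.cast_sub hr]; ring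
  simp [this]
  ring

/-- The perturbed probability of a cross-validation training set of size
`n₁ - n₁K` that contains the perturbed observation `i`:
`g ε = (1/((n₁-n₁K)·C(n₁, n₁-n₁K))) ∑_{r=1}^{n₁-n₁K} (1-ε)^(r-1)(εn₁ - rε + 1)`.
Its value at `0` is `1/C(n₁, n₁K)`, its derivative at `0` is
`n₁K / C(n₁, n₁K)`, and hence `g'(0)/g(0) = n₁K`. -/
theorem cv_perturbed_prob_included
    (n1 n1K : ℕ) (h0 : 0 < n1K) (h : n1K < n1)
    (g : ℝ → ℝ)
    (hg : ∀ ε : ℝ, g ε =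
      (1 / (((n1 : ℝ) - (n1K : ℝ)) * (n1.choose (n1 - n1K) : ℝ))) *
        ∑ r ∈ Finset.Icc 1 (n1 - n1K),
          (1 - ε) ^ (r - 1) * (ε * (n1 : ℝ) - (r : ℝ) * ε + 1)) :
    g 0 = 1 / (n1.choose n1K : ℝ) ∧
      deriv g 0 = (n1K : ℝ) / (n1.choose n1K : ℝ) ∧
      deriv g 0 / g 0 = (n1K : ℝ) := by
  have hCs : n1.choose (n1 - n1K) = n1.choose n1K := Nat.choose_symm h.le
  have hCpos : (0 : ℝ) < (n1.choose n1K : ℝ) := by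
    exact_mod_cast Nat.choose_pos h.le
  have hmpos : (0 : ℝ) < (n1 : ℝ) - (n1K : ℝ) := by
    have : (n1K : ℝ) < (n1 : ℝ) := by exact_mod_cast h
    linarith
  have hcast : ((n1 - n1K : ℕ) : ℝ) = (n1 : ℝ) - (n1K : ℝ) := by
    push_cast [Nat.cast_sub h.le]; ring
  -- value at 0
  have hg0 : g 0 = 1 / (n1.choose n1K : ℝ) := by
    rw [hg 0]
    simp only [zero_mul, mul_zero, sub_zero, one_pow, one_mul, zero_sub, neg_zero, zero_add,
      mul_one, Finset.sum_const, Nat.card_Icc, Nat.add_sub_cancel, nsmul_eq_mul, hCs]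
    rw [hcast]
    field_simp
  -- derivative
  have hkey : HasDerivAt g ((n1K : ℝ) / (n1.choose n1K : ℝ)) 0 := by
    have hgfun : g = fun ε : ℝ =>
        (1 / (((n1 : ℝ) - (n1K : ℝ)) * (n1.choose (n1 - n1K) : ℝ))) *
          ∑ r ∈ Finset.Icc 1 (n1 - n1K),
            (1 - ε) ^ (r - 1) * (ε * (n1 : ℝ) - (r : ℝ) * ε + 1) := funext hg
    rw [hgfun]
    have hsum : HasDerivAt
        (fun ε : ℝ => ∑ r ∈ Finset.Icc 1 (n1 - n1K),
          (1 - ε) ^ (r - 1) * (ε * (n1 : ℝ) - (r : ℝ) * ε + 1))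
        (∑ r ∈ Finset.Icc 1 (n1 - n1K), ((n1 : ℝ) + 1 - 2 * r)) 0 := by
      apply HasDerivAt.fun_sum
      intro r hr
      exact cv_term_deriv n1 r (Finset.mem_Icc.mp hr).1
    have := hsum.const_mul
      (1 / (((n1 : ℝ) - (n1K : ℝ)) * (n1.choose (n1 - n1K) : ℝ)))
    refine this.congr_deriv ?_
    rw [cv_sum_aux, hcast, hCs]
    have hn1K : ((n1 : ℝ) - ((n1 : ℝ) - (n1K : ℝ))) = (n1K : ℝ) := by ring
    rw [hn1K]
    field_simp
  have hd : deriv g 0 = (n1K : ℝ) / (n1.choose n1K : ℝ) := hkey.deriv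
  refine ⟨hg0, hd, ?_⟩
  rw [hg0, hd]
  field_simp
end

section
/- Let n₁, n₂, M be positive integers, fix i ∈ {1,…,n₁}, and let ψ : {1,…,M} × {1,…,n₁} × {1,…,n₂} → ℝ, I¹ : {1,…,M} × {1,…,n₁} → {0,1}, I² : {1,…,M} × {1,…,n₂} → {0,1} with Σ_m I²(m,j₂)·I¹(m,j₁) > 0 for all (j₁,j₂). Let g₀ > 0, and for each (j₁,j₂,m) let g_{j₁,j₂,m} : ℝ → ℝ be differentiable at 0 with g_{j₁,j₂,m}(0) = g₀; write y(j₁,j₂,m) = g'_{j₁,j₂,m}(0)/g₀. Define F(ε) = Σ_{j₂=1}^{n₂} Σ_{j₁=1}^{n₁} ((1−ε)/n₁ + ε·δ_{i j₁})·(1/n₂)·[ Σ_m I²(m,j₂)I¹(m,j₁)ψ(m,j₁,j₂)g_{j₁,j₂,m}(ε) / Σ_m I²(m,j₂)I¹(m,j₁)g_{j₁,j₂,m}(ε) ]. Then F is differentiable at 0 and F'(0) = [AUC_{1i} − AUC^{CVKM}] + (1/(n₁n₂))·Σ_{j₂}Σ_{j₁} [ Σ_m I²I¹ψ·y(j₁,j₂,m)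 / Σ_m I²I¹ ] − (1/(n₁n₂))·Σ_{j₂}Σ_{j₁} [ (Σ_m I²I¹ψ)·(Σ_m I²I¹·y(j₁,j₂,m)) / (Σ_m I²I¹)² ], where AUC_{1i} = (1/n₂)·Σ_{j₂} [Σ_m I²(m,j₂)I¹(m,i)ψ(m,i,j₂)/Σ_m I²(m,j₂)I¹(m,i)] and AUC^{CVKM} = (1/(n₁n₂))·Σ_{j₂}Σ_{j₁} [Σ_m I²I¹ψ/Σ_m I²I¹]. -/
open Finset

/-- The influence-function component `Û_{1i}` for the CVKM estimator: the
perturbed estimator `F ε` (probability mass of class-1 observation `i`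
perturbed by `ε`, each training-set probability `g j₁ j₂ m ε` equal to the
unperturbed value `g₀` at `ε = 0`) is differentiable at `0` and its
derivative decomposes into the three terms `I + II - III`. -/
theorem cvkm_influence_function_derivative
    (n1 n2 M : ℕ) (h1 : 0 < n1) (h2 : 0 < n2) (hM : 0 < M)
    (i : Fin n1)
    (ψ : Fin M → Fin n1 → Fin n2 → ℝ)
    (I1 : Fin M → Fin n1 → ℝ) (I2 : Fin M → Fin n2 → ℝ)
    (hI1 : ∀ m j1, I1 m j1 = 0 ∨ I1 m j1 = 1)
    (hI2 : ∀ m j2, I2 m j2 = 0 ∨ I2 m j2 = 1)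
    (hpos : ∀ (j1 : Fin n1) (j2 : Fin n2), 0 < ∑ m, I2 m j2 * I1 m j1)
    (g0 : ℝ) (hg0 : 0 < g0)
    (g : Fin n1 → Fin n2 → Fin M → ℝ → ℝ)
    (hgdiff : ∀ j1 j2 m, DifferentiableAt ℝ (g j1 j2 m) 0)
    (hgval : ∀ j1 j2 m, g j1 j2 m 0 = g0)
    (y : Fin n1 → Fin n2 → Fin M → ℝ)
    (hy : ∀ j1 j2 m, y j1 j2 m = deriv (g j1 j2 m) 0 / g0)
    (AUC1i AUCCVKM : ℝ)
    (hAUC1i : AUC1i = (1 / (n2 : ℝ)) * ∑ j2,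
      (∑ m, I2 m j2 * I1 m i * ψ m i j2) / (∑ m, I2 m j2 * I1 m i))
    (hAUCCVKM : AUCCVKM = (1 / ((n1 : ℝ) * (n2 : ℝ))) * ∑ j2, ∑ j1,
      (∑ m, I2 m j2 * I1 m j1 * ψ m j1 j2) / (∑ m, I2 m j2 * I1 m j1))
    (F : ℝ → ℝ)
    (hF : ∀ ε : ℝ, F ε = ∑ j2, ∑ j1,
      ((1 - ε) / (n1 : ℝ) + ε * (if j1 = i then 1 else 0)) * (1 / (n2 : ℝ)) *
        ((∑ m, I2 m j2 * I1 m j1 * ψ m j1 j2 * g j1 j2 m ε) /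
          (∑ m, I2 m j2 * I1 m j1 * g j1 j2 m ε))) :
    DifferentiableAt ℝ F 0 ∧
      deriv F 0 =
        (AUC1i - AUCCVKM)
        + (1 / ((n1 : ℝ) * (n2 : ℝ))) * ∑ j2, ∑ j1,
            (∑ m, I2 m j2 * I1 m j1 * ψ m j1 j2 * y j1 j2 m) /
              (∑ m, I2 m j2 * I1 m j1)
        - (1 / ((n1 : ℝ) * (n2 : ℝ))) * ∑ j2, ∑ j1,
            ((∑ m, I2 m j2 * I1 m j1 * ψ m j1 j2) *
                (∑ m, I2 m j2 * I1 m j1 * y j1 j2 m)) /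
              (∑ m, I2 m j2 * I1 m j1) ^ 2 := by
  have hg0' : g0 ≠ 0 := ne_of_gt hg0
  have hn1 : (n1:ℝ) ≠ 0 := Nat.cast_ne_zero.mpr h1.ne'
  have hn2 : (n2:ℝ) ≠ 0 := Nat.cast_ne_zero.mpr h2.ne'
  have key : ∀ (j2 : Fin n2) (j1 : Fin n1),
      HasDerivAt (fun ε : ℝ =>
        ((1 - ε) / (n1 : ℝ) + ε * (if j1 = i then 1 else 0)) * (1 / (n2 : ℝ)) *
        ((∑ m, I2 m j2 * I1 m j1 * ψ m j1 j2 * g j1 j2 m ε) /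
          (∑ m, I2 m j2 * I1 m j1 * g j1 j2 m ε)))
        (((if j1 = i then 1 else 0) * (1/(n2:ℝ)) *
             ((∑ m, I2 m j2 * I1 m j1 * ψ m j1 j2) / (∑ m, I2 m j2 * I1 m j1))
          - (1/((n1:ℝ)*(n2:ℝ))) *
             ((∑ m, I2 m j2 * I1 m j1 * ψ m j1 j2) / (∑ m, I2 m j2 * I1 m j1)))
          + (1/((n1:ℝ)*(n2:ℝ))) *
             ((∑ m, I2 m j2 * I1 m j1 * ψ m j1 j2 * y j1 j2 m) / (∑ m, I2 m j2 * I1 m j1))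
          - (1/((n1:ℝ)*(n2:ℝ))) *
             (((∑ m, I2 m j2 * I1 m j1 * ψ m j1 j2) * (∑ m, I2 m j2 * I1 m j1 * y j1 j2 m)) /
               (∑ m, I2 m j2 * I1 m j1)^2)) 0 := by
    intro j2 j1
    have hSpos := hpos j1 j2
    have hSne : (∑ m, I2 m j2 * I1 m j1) ≠ 0 := ne_of_gt hSpos
    have hN : HasDerivAt (fun ε => ∑ m, I2 m j2 * I1 m j1 * ψ m j1 j2 * g j1 j2 m ε)
        (∑ m, I2 m j2 * I1 m j1 * ψ m j1 j2 * deriv (g j1 j2 m) 0) 0 :=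
      HasDerivAt.fun_sum fun m _ => ((hgdiff j1 j2 m).hasDerivAt).const_mul _
    have hD : HasDerivAt (fun ε => ∑ m, I2 m j2 * I1 m j1 * g j1 j2 m ε)
        (∑ m, I2 m j2 * I1 m j1 * deriv (g j1 j2 m) 0) 0 :=
      HasDerivAt.fun_sum fun m _ => ((hgdiff j1 j2 m).hasDerivAt).const_mul _
    have hD0 : (∑ m, I2 m j2 * I1 m j1 * g j1 j2 m 0) = (∑ m, I2 m j2 * I1 m j1) * g0 := by
      rw [Finset.sum_mul]; exact Finset.sum_congr rfl fun m _ => by rw [hgval]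
    have hN0 : (∑ m, I2 m j2 * I1 m j1 * ψ m j1 j2 * g j1 j2 m 0)
        = (∑ m, I2 m j2 * I1 m j1 * ψ m j1 j2) * g0 := by
      rw [Finset.sum_mul]; exact Finset.sum_congr rfl fun m _ => by rw [hgval]
    have hDne : (∑ m, I2 m j2 * I1 m j1 * g j1 j2 m 0) ≠ 0 := by
      rw [hD0]; exact mul_ne_zero hSne hg0'
    have hderiv_y : ∀ m, deriv (g j1 j2 m) 0 = y j1 j2 m * g0 := fun m => by
      rw [hy]; field_simp
    have hNd : (∑ m, I2 m j2 * I1 m j1 * ψ m j1 j2 * deriv (g j1 j2 m) 0)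
        = (∑ m, I2 m j2 * I1 m j1 * ψ m j1 j2 * y j1 j2 m) * g0 := by
      rw [Finset.sum_mul]
      exact Finset.sum_congr rfl fun m _ => by rw [hderiv_y]; ring
    have hDd : (∑ m, I2 m j2 * I1 m j1 * deriv (g j1 j2 m) 0)
        = (∑ m, I2 m j2 * I1 m j1 * y j1 j2 m) * g0 := by
      rw [Finset.sum_mul]
      exact Finset.sum_congr rfl fun m _ => by rw [hderiv_y]; ring
    have hQ := hN.fun_div hD hDne
    have ha : HasDerivAt (fun ε : ℝ =>
        ((1 - ε) / (n1 : ℝ) + ε * (if j1 = i then 1 else 0)) * (1 / (n2 : ℝ)))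
        (((0 - 1) / (n1:ℝ) + 1 * (if j1 = i then 1 else 0)) * (1/(n2:ℝ))) 0 :=
      ((((hasDerivAt_const (0:ℝ) (1:ℝ)).sub (hasDerivAt_id 0)).div_const _).add
        ((hasDerivAt_id 0).mul_const _)).mul_const _
    have hT := ha.fun_mul hQ
    refine hT.congr_deriv ?_
    rw [hN0, hD0, hNd, hDd]
    have hS2 : (∑ m, I2 m j2 * I1 m j1) * g0 ≠ 0 := mul_ne_zero hSne hg0'
    split_ifs <;> field_simp <;> ring
  have hFfun : F = fun ε => ∑ j2, ∑ j1,
      ((1 - ε) / (n1 : ℝ) + ε * (if j1 = i then 1 else 0)) * (1 / (n2 : ℝ)) *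
        ((∑ m, I2 m j2 * I1 m j1 * ψ m j1 j2 * g j1 j2 m ε) /
          (∑ m, I2 m j2 * I1 m j1 * g j1 j2 m ε)) := funext hF
  have hFD : HasDerivAt F (∑ j2, ∑ j1,
      (((if j1 = i then 1 else 0) * (1/(n2:ℝ)) *
           ((∑ m, I2 m j2 * I1 m j1 * ψ m j1 j2) / (∑ m, I2 m j2 * I1 m j1))
        - (1/((n1:ℝ)*(n2:ℝ))) *
           ((∑ m, I2 m j2 * I1 m j1 * ψ m j1 j2) / (∑ m, I2 m j2 * I1 m j1)))
        + (1/((n1:ℝ)*(n2:ℝ))) *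
           ((∑ m, I2 m j2 * I1 m j1 * ψ m j1 j2 * y j1 j2 m) / (∑ m, I2 m j2 * I1 m j1))
        - (1/((n1:ℝ)*(n2:ℝ))) *
           (((∑ m, I2 m j2 * I1 m j1 * ψ m j1 j2) * (∑ m, I2 m j2 * I1 m j1 * y j1 j2 m)) /
             (∑ m, I2 m j2 * I1 m j1)^2))) 0 := by
    rw [hFfun]
    exact HasDerivAt.fun_sum fun j2 _ => HasDerivAt.fun_sum fun j1 _ => key j2 j1
  refine ⟨hFD.differentiableAt, ?_⟩
  rw [hFD.deriv, hAUC1i, hAUCCVKM]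
  simp only [Finset.sum_sub_distrib, Finset.sum_add_distrib, ite_mul, one_mul, zero_mul,
    Finset.sum_ite_eq', Finset.mem_univ, if_true, ← Finset.mul_sum]
end
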